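/- Differential identities for the lefton profile: For all x ∈ ℝ: (i) Q''(x) = b²·Q(x) − (b(3b+1)/(2k))·Q(x)^{1/b+2}; (ii) (Q'(x))² = b²·( Q(x)² − Q(x)^{1/b+3}/k ); and (iii) Q(x)^{1/b+1} = k·sech²(νx). -/

import Mathlib

open Real MeasureTheory Filter

noncomputable section

/-- `ν = -(b+1)/2`. -/
def nuP (b : ℝ) : ℝ := -(b + 1) / 2

/-- The lefton momentum profile `Q(x) = (A(1-b)/2) (cosh(νx))^{b/ν}`. -/
def Qp (b A : ℝ) (x : ℝ) : ℝ :=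
  A * (1 - b) / 2 * Real.cosh (nuP b * x) ^ (b / nuP b)

/-- The lefton velocity profile `q(x) = A (cosh(νx))^{-1/ν}`. -/
def qp (b A : ℝ) (x : ℝ) : ℝ := A * Real.cosh (nuP b * x) ^ (-1 / nuP b)

/-- `k = (A(1-b)/2)^{1/b+1}`. -/
def kP (b A : ℝ) : ℝ := (A * (1 - b) / 2) ^ (1 / b + 1)

/-- The weight `α(x) = Q(x)^{-1/b-2}`. -/
def alphaP (b A : ℝ) (x : ℝ) : ℝ := Qp b A x ^ (-1 / b - 2)

/-- `SQ(x) = (2k(1-b)/b) Q^{-1/b} + (2(b-1)/b) Q`. -/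
def SQp (b A : ℝ) (x : ℝ) : ℝ :=
  2 * kP b A * (1 - b) / b * Qp b A x ^ (-1 / b) + 2 * (b - 1) / b * Qp b A x

/-- The Pöschl–Teller potential `H̃₀(x) = 1/4 - (b(1+2b)/4) sech²(νx)`. -/
def Htilde0 (b : ℝ) (x : ℝ) : ℝ :=
  1 / 4 - b * (1 + 2 * b) / 4 * (1 / Real.cosh (nuP b * x)) ^ 2

/-- The Schrödinger operator `(Hg)(x) = (2k/b²)(−g'' + H̃₀ g)`. -/
def Hop (b A : ℝ) (g : ℝ → ℝ) (x : ℝ) : ℝ :=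
  2 * kP b A / b ^ 2 * (-(deriv (deriv g) x) + Htilde0 b x * g x)

/-- The linearized operator `(𝓛f)(x) = k(−((2α/b²) f')' − (2(b+1)/b) α f)`. -/
def Lop (b A : ℝ) (f : ℝ → ℝ) (x : ℝ) : ℝ :=
  kP b A * (-(deriv (fun y => 2 * alphaP b A y / b ^ 2 * deriv f y) x)
    - 2 * (b + 1) / b * alphaP b A x * f x)

/-- The integrand of the conserved functional `F₂`. -/
def F2Integrand (b : ℝ) (f : ℝ → ℝ) (x : ℝ) : ℝ :=
  f x ^ (-1 / b) * ((deriv f x) ^ 2 / (b ^ 2 * f x ^ 2) + 1)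

/-- The squared weighted norm `‖f‖²_{H¹_α} = ∫ (f² + f'²) α`. -/
def HalphaSq (b A : ℝ) (f : ℝ → ℝ) : ℝ :=
  ∫ x, (f x ^ 2 + deriv f x ^ 2) * alphaP b A x

/-- The `𝒵`-norm `‖f‖_𝒵 = ‖f‖_{H¹_α} + sup_x |f(x)|/Q(x)`. -/
def ZNorm (b A : ℝ) (f : ℝ → ℝ) : ℝ :=
  Real.sqrt (HalphaSq b A f) + ⨆ x : ℝ, |f x| / Qp b A x

/-- `m : ℝ → ℝ → ℝ` (time then space) solves the b-family equation in momentum form,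
with velocity `u` satisfying `m = u - u_xx` and `m_t + u m_x + b u_x m = 0`. -/
def IsBFamilySolution (b : ℝ) (m u : ℝ → ℝ → ℝ) : Prop :=
  (∀ t x, m t x = u t x - deriv (deriv (u t)) x) ∧
  ∀ t x, deriv (fun s => m s x) t + u t x * deriv (m t) x + b * deriv (u t) x * m t x = 0

/-- `(v, h)` solves the linearization of the b-family equation around the lefton:
`h - h_xx = v` and `v_t = ∂_x(q h_xx + (b-1) q' h_x - (b+1) q h + q'' h)`. -/
def IsLinearizedSolution (b A : ℝ) (v h : ℝ → ℝ → ℝ) : Prop :=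
  (∀ t x, h t x - deriv (deriv (h t)) x = v t x) ∧
  ∀ t x, deriv (fun s => v s x) t =
    deriv (fun y => qp b A y * deriv (deriv (h t)) y
      + (b - 1) * deriv (qp b A) y * deriv (h t) y
      - (b + 1) * qp b A y * h t y + deriv (deriv (qp b A)) y * h t y) x

/-- The quadratic form `(𝓛η, η) = (2k/b²)∫ η'² α − (2k(b+1)/b)∫ η² α`. -/
def quadFormL (b A : ℝ) (η : ℝ → ℝ) : ℝ :=
  2 * kP b A / b ^ 2 * (∫ x, deriv η x ^ 2 * alphaP b A x)
    - 2 * kP b A * (b + 1) / b * (∫ x, η x ^ 2 * alphaP b A x)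

/-- The monotonicity weight `ψ_L(x) = (2/π) arctan(exp(νx/L))` with `L = 3 - b`. -/
def psiL (b : ℝ) (x : ℝ) : ℝ :=
  2 / Real.pi * Real.arctan (Real.exp (nuP b * x / (3 - b)))

/-- **Differential identities for the lefton profile**:
(i) `Q'' = b²Q − (b(3b+1)/(2k)) Q^{1/b+2}`;
(ii) `(Q')² = b²(Q² − Q^{1/b+3}/k)`;
(iii) `Q^{1/b+1} = k sech²(νx)`. -/
theorem lefton_differential_identities (b A : ℝ) (hb : b < -1) (hA : 0 < A) :
    (∀ x : ℝ, deriv (deriv (Qp b A)) x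
        = b ^ 2 * Qp b A x - b * (3 * b + 1) / (2 * kP b A) * Qp b A x ^ (1 / b + 2)) ∧
    (∀ x : ℝ, (deriv (Qp b A) x) ^ 2
        = b ^ 2 * (Qp b A x ^ 2 - Qp b A x ^ (1 / b + 3) / kP b A)) ∧
    ∀ x : ℝ, Qp b A x ^ (1 / b + 1) = kP b A * (1 / Real.cosh (nuP b * x)) ^ 2 := by
  have hb1 : b + 1 ≠ 0 := by intro h; nlinarith
  have hb0 : b ≠ 0 := by intro h; nlinarith
  have hν : nuP b = -(b + 1) / 2 := rfl
  have hνpos : 0 < nuP b := by rw [hν]; linarith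
  set ν := nuP b with hνdef
  have hνne : ν ≠ 0 := hνpos.ne'
  set C := A * (1 - b) / 2 with hCdef
  have hCpos : 0 < C := by rw [hCdef]; nlinarith
  set p := b / ν with hpdef
  have hpν : p * ν = b := div_mul_cancel₀ b hνne
  have hcpos : ∀ x : ℝ, 0 < Real.cosh (ν * x) := fun x => Real.cosh_pos _
  have hQeq : ∀ x, Qp b A x = C * Real.cosh (ν * x) ^ p := fun x => rfl
  have hQpos : ∀ x, 0 < Qp b A x := by
    intro x
    rw [hQeq]
    exact mul_pos hCpos (Real.rpow_pos_of_pos (hcpos x) p)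
  have hkeq : kP b A = C ^ (1 / b + 1) := rfl
  have hkpos : 0 < kP b A := by rw [hkeq]; exact Real.rpow_pos_of_pos hCpos _
  -- exponent arithmetic
  have hexp : p * (1 / b + 1) = -2 := by
    have h1 : (1 : ℝ) / b + 1 = (b + 1) / b := by field_simp; ring
    have hne2 : -(b + 1) / 2 * b ≠ 0 := mul_ne_zero (by rw [← hν]; exact hνne) hb0
    rw [hpdef, hν, h1, div_mul_div_comm, div_eq_iff hne2]; ring
  -- (iii)
  have hiii : ∀ x : ℝ, Qp b A x ^ (1 / b + 1) = kP b A * (1 / Real.cosh (ν * x)) ^ 2 := by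
    intro x
    have hcne : Real.cosh (ν * x) ≠ 0 := (hcpos x).ne'
    rw [hQeq, Real.mul_rpow hCpos.le (Real.rpow_nonneg (hcpos x).le p),
      ← Real.rpow_mul (hcpos x).le, hexp, hkeq]
    have hm2 : Real.cosh (ν * x) ^ ((-2) : ℝ) = (1 / Real.cosh (ν * x)) ^ 2 := by
      rw [show ((-2 : ℝ)) = ((-2 : ℤ) : ℝ) by norm_num, Real.rpow_intCast]
      rw [zpow_neg, div_pow, one_pow, ← zpow_natCast (Real.cosh (ν * x)) 2]
      norm_num
    rw [hm2]
  -- first derivative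
  have hc1 : ∀ x : ℝ, HasDerivAt (fun y => Real.cosh (ν * y)) (ν * Real.sinh (ν * x)) x := by
    intro x
    have h := ((hasDerivAt_id x).const_mul ν).cosh
    simpa [mul_comm] using h
  have hs1 : ∀ x : ℝ, HasDerivAt (fun y => Real.sinh (ν * y)) (ν * Real.cosh (ν * x)) x := by
    intro x
    have h := ((hasDerivAt_id x).const_mul ν).sinh
    simpa [mul_comm] using h
  have hQ' : ∀ x : ℝ, HasDerivAt (Qp b A)
      (b * C * Real.cosh (ν * x) ^ (p - 1) * Real.sinh (ν * x)) x := by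
    intro x
    have h2 := ((hc1 x).rpow_const (p := p) (Or.inl (hcpos x).ne')).const_mul C
    have hQf : Qp b A = fun y => C * Real.cosh (ν * y) ^ p := funext hQeq
    rw [hQf]
    refine h2.congr_deriv ?_
    rw [← hpν]; ring
  have hderivQ : deriv (Qp b A)
      = fun x => b * C * Real.cosh (ν * x) ^ (p - 1) * Real.sinh (ν * x) :=
    funext fun x => (hQ' x).deriv
  -- second derivative
  have hQ'' : ∀ x : ℝ, HasDerivAt (fun y => b * C * Real.cosh (ν * y) ^ (p - 1) * Real.sinh (ν * y))
      (b * C * ν * ((p - 1) * Real.cosh (ν * x) ^ (p - 2) * Real.sinh (ν * x) ^ 2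
        + Real.cosh (ν * x) ^ (p - 1) * Real.cosh (ν * x))) x := by
    intro x
    have ha := (hc1 x).rpow_const (Or.inl (hcpos x).ne') (p := p - 1)
    rw [show p - 1 - 1 = p - 2 by ring] at ha
    have hmul := ((ha.const_mul (b * C)).mul (hs1 x))
    refine hmul.congr_deriv ?_
    ring
  refine ⟨fun x => ?_, fun x => ?_, hiii⟩
  all_goals
    have hcne : Real.cosh (ν * x) ≠ 0 := (hcpos x).ne'
    have hkne : kP b A ≠ 0 := hkpos.ne'
    have hsplit2 : Real.cosh (ν * x) ^ p
        = Real.cosh (ν * x) ^ (p - 2) * Real.cosh (ν * x) ^ 2 := by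
      rw [← Real.rpow_natCast (Real.cosh (ν * x)) 2, ← Real.rpow_add (hcpos x)]
      norm_num
    have hsplit1 : Real.cosh (ν * x) ^ (p - 1)
        = Real.cosh (ν * x) ^ (p - 2) * Real.cosh (ν * x) := by
      rw [← Real.rpow_add_one hcne]
      congr 1
      ring
  · -- (i)
    have hd2 : deriv (deriv (Qp b A)) x
        = b * C * ν * ((p - 1) * Real.cosh (ν * x) ^ (p - 2) * Real.sinh (ν * x) ^ 2
          + Real.cosh (ν * x) ^ (p - 1) * Real.cosh (ν * x)) := by
      rw [hderivQ]; exact (hQ'' x).deriv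
    have hR : b * (3 * b + 1) / (2 * kP b A) * Qp b A x ^ (1 / b + 2)
        = b * (3 * b + 1) / 2 * (C * Real.cosh (ν * x) ^ (p - 2)) := by
      rw [show (1 / b + 2 : ℝ) = (1 / b + 1) + 1 by ring, Real.rpow_add_one (hQpos x).ne',
        hiii x, hQeq x, hsplit2]
      field_simp
    rw [hd2, hR, hQeq x, hsplit2, hsplit1, Real.sinh_sq]
    linear_combination (b * C * Real.cosh (ν * x) ^ (p - 2) * (Real.cosh (ν * x) ^ 2 - 1)) * hpν
      + (b * C * Real.cosh (ν * x) ^ (p - 2)) * hν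
  · -- (ii)
    have hsplitA : Real.cosh (ν * x) ^ p
        = Real.cosh (ν * x) ^ (p - 1) * Real.cosh (ν * x) := by
      rw [← Real.rpow_add_one hcne]
      congr 1
      ring
    have hd1v : deriv (Qp b A) x = b * C * Real.cosh (ν * x) ^ (p - 1) * Real.sinh (ν * x) :=
      (hQ' x).deriv
    have h13 : Qp b A x ^ (1 / b + 3) / kP b A = (C * Real.cosh (ν * x) ^ (p - 1)) ^ 2 := by
      rw [show (1 / b + 3 : ℝ) = 1 / b + 1 + 1 + 1 by ring, Real.rpow_add_one (hQpos x).ne',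
        Real.rpow_add_one (hQpos x).ne', hiii x, hQeq x, hsplitA]
      field_simp
    rw [hd1v, h13, hQeq x, hsplitA]
    linear_combination (b * C * Real.cosh (ν * x) ^ (p - 1)) ^ 2 * Real.sinh_sq (ν * x)
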